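/- arXiv:1506.00112 — 6 statements merged into one kernel-verified Lean document; each statement's English description precedes it below -/
import Mathlib

section
/- Let g ∈ S and let τ be a filter on S such that g⁻¹U ∈ τ for every U ∈ τ. If L ⊆ S is τ-large then gL is τ-large. -/
variable {S : Type*} [Semigroup S]

/-- `g⁻¹A = {x : g*x ∈ A}`. -/
def invImg (g : S) (A : Set S) : Set S := {x | g * x ∈ A}

/-- `F⁻¹A = ⋃_{g∈F} g⁻¹A`. -/
def finvImg (F : Set S) (A : Set S) : Set S := ⋃ g ∈ F, invImg g A

/-- `L` is `τ`-large. -/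
def largeTau (τ : Filter S) (L : Set S) : Prop :=
  ∀ U ∈ τ, ∃ F : Finset S, ↑F ⊆ U ∧ finvImg ↑F L ∈ τ

/-- `A_p = {x : x⁻¹A ∈ p}`. -/
def memImg (p : Ultrafilter S) (A : Set S) : Set S := {x | invImg x A ∈ p}

/-- `T` is `τ`-thick. -/
def thickTau (τ : Filter S) (T : Set S) : Prop :=
  ∃ U ∈ τ, ∀ F : Finset S, ↑F ⊆ U → ∀ V ∈ τ, ∃ x ∈ V, ∀ f ∈ F, f * x ∈ T

/-- `A` is `τ`-prethick. -/
def prethickTau (τ : Filter S) (A : Set S) : Prop :=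
  ∀ U ∈ τ, ∃ F : Finset S, ↑F ⊆ U ∧ thickTau τ (finvImg ↑F A)

/-- `A` is `τ`-small. -/
def smallTau (τ : Filter S) (A : Set S) : Prop :=
  ∀ L, largeTau τ L → largeTau τ (L \ A)

/-- `T` is `τ`-extrathick. -/
def extrathickTau (τ : Filter S) (T : Set S) : Prop :=
  ∀ p : Ultrafilter S, τ ≤ ↑p → memImg p T ∈ τ

/-- Product of ultrafilters: `A ∈ p*q ↔ {x : x⁻¹A ∈ q} ∈ p`. -/
def uMul (p q : Ultrafilter S) : Ultrafilter S :=
  p.bind fun x => q.map fun y => x * y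

/-- `τ̄ = {p ∈ βS : τ ⊆ p}`. -/
def tauBar (τ : Filter S) : Set (Ultrafilter S) := {p | τ ≤ ↑p}

/-- `L` is a left ideal of the subsemigroup `T` of `βS`. -/
def isLeftIdeal (T L : Set (Ultrafilter S)) : Prop :=
  L.Nonempty ∧ L ⊆ T ∧ ∀ q ∈ T, ∀ r ∈ L, uMul q r ∈ L

/-- `L` is a minimal left ideal of `T`. -/
def isMinLeftIdeal (T L : Set (Ultrafilter S)) : Prop :=
  isLeftIdeal T L ∧ ∀ L', isLeftIdeal T L' → L' ⊆ L → L' = L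

/-- `M(τ̄)`: union of all minimal left ideals of `τ̄`. -/
def MSet (τ : Filter S) : Set (Ultrafilter S) := ⋃₀ {L | isMinLeftIdeal (tauBar τ) L}

/-- `Δ_τ(A)`. -/
def DeltaTau (τ : Filter S) (A : Set S) : Set S :=
  {x | ∀ U ∈ τ, ((invImg x A ∩ A) ∩ U).Nonempty}

theorem stmt3 (τ : Filter S) [τ.NeBot] (g : S)
    (hg : ∀ U ∈ τ, invImg g U ∈ τ) (L : Set S) (hL : largeTau τ L) :
    largeTau τ ((fun x => g * x) '' L) := by
  intro U hU
  classical
  obtain ⟨F, hFsub, hFmem⟩ := hL (invImg g U) (hg U hU)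
  refine ⟨F.image (g * ·), ?_, ?_⟩
  · intro a ha
    simp only [Finset.coe_image, Set.mem_image] at ha
    obtain ⟨b, hb, rfl⟩ := ha
    exact hFsub hb
  · refine Filter.mem_of_superset hFmem ?_
    intro x hx
    simp only [finvImg, Set.mem_iUnion, invImg, Set.mem_setOf_eq] at hx ⊢
    obtain ⟨b, hb, hbx⟩ := hx
    exact ⟨g * b, Finset.mem_coe.2 (Finset.mem_image_of_mem _ hb),
      mul_assoc g b x ▸ ⟨b * x, hbx, rfl⟩⟩
end

section
/- Let τ be a filter on a semigroup S such that for every U ∈ τ the set {g ∈ S : g⁻¹U ∈ τ} belongs to τ. If T is τ-thick, then there exists V ∈ τ such that g⁻¹T is τ-thick for every g ∈ V. -/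
variable {S : Type*} [Semigroup S]

theorem stmt5 (τ : Filter S) [τ.NeBot]
    (h : ∀ U ∈ τ, {g : S | invImg g U ∈ τ} ∈ τ) (T : Set S) (hT : thickTau τ T) :
    ∃ V ∈ τ, ∀ g ∈ V, thickTau τ (invImg g T) := by
  classical
  obtain ⟨U, hU, hmain⟩ := hT
  refine ⟨{g : S | invImg g U ∈ τ}, h U hU, fun g hg => ?_⟩
  refine ⟨invImg g U, hg, fun F hF W hW => ?_⟩
  have hsub : ↑(F.image (g * ·)) ⊆ U := by
    intro y hy
    simp only [Finset.coe_image, Set.mem_image] at hy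
    obtain ⟨f, hf, rfl⟩ := hy
    exact hF hf
  obtain ⟨x, hx, hfx⟩ := hmain (F.image (g * ·)) hsub W hW
  refine ⟨x, hx, fun f hf => ?_⟩
  have := hfx (g * f) (Finset.mem_image_of_mem _ hf)
  simpa [invImg, mul_assoc] using this
end

section
/- In the topological group ℝ (additive) with τ the filter of neighborhoods of 0, the set ℝ⁺ = {r ∈ ℝ : r > 0} is τ-large, but for every x > 0 the translate ℝ⁺ + x is not τ-large. -/
/-- Additive version: `a⁻¹A = {x : a + x ∈ A}`. -/
def ainvImg (a : ℝ) (A : Set ℝ) : Set ℝ := {x | a + x ∈ A}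

/-- `F⁻¹A = ⋃_{a∈F} a⁻¹A`. -/
def afinvImg (F : Set ℝ) (A : Set ℝ) : Set ℝ := ⋃ a ∈ F, ainvImg a A

/-- `L` is `τ`-large (additive notation). -/
def alargeTau (τ : Filter ℝ) (L : Set ℝ) : Prop :=
  ∀ U ∈ τ, ∃ F : Finset ℝ, ↑F ⊆ U ∧ afinvImg ↑F L ∈ τ

theorem stmt6 :
    alargeTau (nhds 0) {r : ℝ | 0 < r} ∧
      ∀ x : ℝ, 0 < x → ¬ alargeTau (nhds 0) ((fun r => r + x) '' {r : ℝ | 0 < r}) := by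
  constructor
  · intro U hU
    obtain ⟨ε, hε, hball⟩ := Metric.mem_nhds_iff.mp hU
    refine ⟨{ε / 2}, ?_, ?_⟩
    · intro a ha
      simp only [Finset.coe_singleton, Set.mem_singleton_iff] at ha
      subst ha
      apply hball
      rw [Metric.mem_ball, Real.dist_eq, sub_zero, abs_of_pos (by linarith)]
      linarith
    · have : afinvImg (↑({ε / 2} : Finset ℝ)) {r : ℝ | 0 < r} = Set.Ioi (-(ε / 2)) := by
        ext y
        simp [afinvImg, ainvImg, Set.mem_Ioi]
        constructor <;> intro h <;> linarith
      rw [this]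
      exact Ioi_mem_nhds (by linarith)
  · intro x hx hlarge
    obtain ⟨F, hF, hmem⟩ := hlarge (Set.Iio x) (Iio_mem_nhds hx)
    have h0 := mem_of_mem_nhds hmem
    simp only [afinvImg, ainvImg, Set.mem_iUnion] at h0
    obtain ⟨a, haF, h⟩ := h0
    simp only [Set.mem_setOf_eq, Set.mem_image] at h
    obtain ⟨r, hr, hrx⟩ := h
    have : a < x := hF haF
    linarith
end

section
/- Let G be a group and τ the neighborhood filter of the identity for some group topology on G, and let U ∈ τ. For every partition U = A ∪ B into two cells and every V ∈ τ, there exist a cell C ∈ {A, B} and a set K ⊆ V with |K| ≤ 2 such that K⁻¹CC⁻¹ ∈ τ. -/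
variable {S : Type*} [Semigroup S]

open Pointwise in
theorem stmt10 {G : Type*} [Group G] [TopologicalSpace G] [IsTopologicalGroup G]
    (U : Set G) (hU : U ∈ nhds (1 : G)) (A B : Set G) (hAB : U = A ∪ B)
    (V : Set G) (hV : V ∈ nhds (1 : G)) :
    ∃ C ∈ ({A, B} : Set (Set G)), ∃ K : Finset G,
      ↑K ⊆ V ∧ K.card ≤ 2 ∧ finvImg ↑K (C * C⁻¹) ∈ nhds (1 : G) := by
  classical
  -- choose W with W*W ⊆ U and W ⊆ V
  obtain ⟨W₀, hW₀open, hW₀1, hW₀mul⟩ : ∃ W₀ : Set G, IsOpen W₀ ∧ (1:G) ∈ W₀ ∧ W₀ * W₀ ⊆ U :=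
    exists_open_nhds_one_mul_subset hU
  have hW₀ : W₀ ∈ nhds (1:G) := hW₀open.mem_nhds hW₀1
  set W : Set G := W₀ ∩ V with hWdef
  have hW : W ∈ nhds (1:G) := Filter.inter_mem hW₀ hV
  have h1V : (1:G) ∈ V := mem_of_mem_nhds hV
  have key : ∀ A B : Set G, U = A ∪ B → (1:G) ∈ A →
      ∃ C ∈ ({A, B} : Set (Set G)), ∃ K : Finset G,
        ↑K ⊆ V ∧ K.card ≤ 2 ∧ finvImg ↑K (C * C⁻¹) ∈ nhds (1 : G) := by
    intro A B hAB h1A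
    by_cases hcase : ∀ x ∈ W, ∃ b ∈ B ∩ W, x * b ∈ B
    · -- every point of W is in B*B⁻¹
      refine ⟨B, by simp, {1}, ?_, by simp, ?_⟩
      · intro k hk
        simp only [Finset.coe_singleton, Set.mem_singleton_iff] at hk
        exact hk ▸ h1V
      · refine Filter.mem_of_superset hW ?_
        intro x hx
        obtain ⟨b, hb, hxb⟩ := hcase x hx
        have hmem : x ∈ B * B⁻¹ := by
          have : (x * b) * b⁻¹ ∈ B * B⁻¹ :=
            Set.mul_mem_mul hxb (by simpa using Set.inv_mem_inv.mpr hb.1)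
          simpa using this
        simp only [finvImg, invImg, Finset.coe_singleton, Set.mem_iUnion, Set.mem_setOf_eq]
        exact ⟨1, rfl, by simpa using hmem⟩
    · push_neg at hcase
      obtain ⟨q, hqW, hq⟩ := hcase
      refine ⟨A, by simp, {1, q}, ?_, ?_, ?_⟩
      · intro k hk
        simp only [Finset.coe_insert, Finset.coe_singleton, Set.mem_insert_iff,
          Set.mem_singleton_iff] at hk
        rcases hk with rfl | rfl
        · exact h1V
        · exact hqW.2
      · exact le_trans (Finset.card_insert_le _ _) (by simp)
      · refine Filter.mem_of_superset hW ?_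
        intro x hx
        have hxU : x ∈ U := by
          have : x * 1 ∈ W₀ * W₀ := Set.mul_mem_mul hx.1 hW₀1
          simpa using hW₀mul this
        have hmem1inv : (1:G)⁻¹ ∈ A⁻¹ := by simpa using Set.inv_mem_inv.mpr h1A
        rw [hAB] at hxU
        rcases hxU with hxA | hxB
        · have hmem : x ∈ A * A⁻¹ := by
            have : x * (1:G)⁻¹ ∈ A * A⁻¹ := Set.mul_mem_mul hxA hmem1inv
            simpa using this
          simp only [finvImg, invImg, Finset.coe_insert, Finset.coe_singleton,
            Set.mem_iUnion, Set.mem_setOf_eq]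
          exact ⟨1, by simp, by simpa using hmem⟩
        · have hqxU : q * x ∈ U := hW₀mul (Set.mul_mem_mul hqW.1 hx.1)
          have hqxA : q * x ∈ A := by
            rw [hAB] at hqxU
            rcases hqxU with h | h
            · exact h
            · exact absurd h (hq x ⟨hxB, hx⟩)
          have hmem : q * x ∈ A * A⁻¹ := by
            have : (q * x) * (1:G)⁻¹ ∈ A * A⁻¹ := Set.mul_mem_mul hqxA hmem1inv
            simpa using this
          simp only [finvImg, invImg, Finset.coe_insert, Finset.coe_singleton,
            Set.mem_iUnion, Set.mem_setOf_eq]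
          exact ⟨q, by simp, hmem⟩
  have h1U : (1:G) ∈ U := mem_of_mem_nhds hU
  rw [hAB] at h1U
  rcases h1U with h1A | h1B
  · exact key A B hAB h1A
  · obtain ⟨C, hC, hrest⟩ := key B A (by rw [hAB, Set.union_comm]) h1B
    exact ⟨C, by rw [Set.pair_comm]; exact hC, hrest⟩
end

section
/- Let τ be a left inverse invariant filter on a semigroup S. Then the family of τ-prethick subsets of S is partition regular: if A is τ-prethick and A = A₁ ∪ … ∪ Aₙ, then some Aᵢ is τ-prethick. -/
variable {S : Type*} [Semigroup S]

lemma mem_finvImg {F A : Set S} {x : S} :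
    x ∈ finvImg F A ↔ ∃ g ∈ F, g * x ∈ A := by
  simp [finvImg, invImg]

lemma largeTau_mono {τ : Filter S} {L L' : Set S} (h : L ⊆ L') (hL : largeTau τ L) :
    largeTau τ L' := by
  intro U hU
  obtain ⟨F, hF, hFL⟩ := hL U hU
  refine ⟨F, hF, Filter.mem_of_superset hFL ?_⟩
  intro x hx
  rw [mem_finvImg] at hx ⊢
  obtain ⟨g, hg, hgx⟩ := hx
  exact ⟨g, hg, h hgx⟩

lemma smallTau_empty {τ : Filter S} : smallTau τ (∅ : Set S) := by
  intro L hL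
  simpa using hL

lemma smallTau_subset {τ : Filter S} {A B : Set S} (h : A ⊆ B) (hB : smallTau τ B) :
    smallTau τ A := by
  intro L hL
  exact largeTau_mono (Set.diff_subset_diff_right h) (hB L hL)

lemma smallTau_union {τ : Filter S} {A B : Set S} (hA : smallTau τ A) (hB : smallTau τ B) :
    smallTau τ (A ∪ B) := by
  intro L hL
  have h := hB _ (hA L hL)
  rwa [Set.diff_diff] at h

lemma smallTau_biUnion {τ : Filter S} {ι : Type*} [DecidableEq ι] (s : Finset ι)
    (f : ι → Set S) (h : ∀ i ∈ s, smallTau τ (f i)) :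
    smallTau τ (⋃ i ∈ s, f i) := by
  classical
  induction s using Finset.induction_on with
  | empty => simpa using (smallTau_empty (τ := τ))
  | @insert a s ha ih =>
      rw [Finset.set_biUnion_insert]
      exact smallTau_union (h a (Finset.mem_insert_self a s))
        (ih fun i hi => h i (Finset.mem_insert_of_mem hi))

/-- (a): a prethick set is not small. -/
lemma prethick_not_small {τ : Filter S} [τ.NeBot]
    (hinv : ∀ g : S, ∀ U ∈ τ, invImg g U ∈ τ)
    {A : Set S} (hA : prethickTau τ A) : ¬ smallTau τ A := by
  classical
  obtain ⟨F₀, -, W, hW, hthick⟩ := hA Set.univ Filter.univ_mem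
  set T := finvImg (↑F₀ : Set S) A with hT
  intro hsmall
  -- L := A ∪ Tᶜ is large
  have hLlarge : largeTau τ (A ∪ Tᶜ) := by
    intro U hU
    have hmem : (U ∩ ⋂ f ∈ F₀, invImg f U) ∈ τ :=
      Filter.inter_mem hU ((Filter.biInter_finset_mem F₀).2 fun f _ => hinv f U hU)
    obtain ⟨u, huU, huI⟩ := Filter.nonempty_of_mem hmem
    refine ⟨insert u (F₀.image (· * u)), ?_, ?_⟩
    · intro g hg
      simp only [Finset.coe_insert, Set.mem_insert_iff, Finset.coe_image,
        Set.mem_image, Finset.mem_coe] at hg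
      rcases hg with rfl | ⟨f, hf, rfl⟩
      · exact huU
      · exact Set.mem_iInter₂.1 huI f hf
    · refine Filter.mem_of_superset Filter.univ_mem fun x _ => ?_
      rw [mem_finvImg]
      by_cases hx : u * x ∈ T
      · rw [hT, mem_finvImg] at hx
        obtain ⟨g, hg, hgx⟩ := hx
        refine ⟨g * u, ?_, Or.inl ?_⟩
        · simp only [Finset.coe_insert, Set.mem_insert_iff, Finset.coe_image,
            Set.mem_image, Finset.mem_coe]
          exact Or.inr ⟨g, hg, rfl⟩
        · rw [mul_assoc]; exact hgx
      · exact ⟨u, by simp, Or.inr hx⟩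
  -- but (A ∪ Tᶜ) \ A is not large
  have hnot : ¬ largeTau τ ((A ∪ Tᶜ) \ A) := by
    intro hlarge
    obtain ⟨F', hF', hV⟩ := hlarge W hW
    obtain ⟨x, hxV, hxT⟩ := hthick F' hF' _ hV
    rw [mem_finvImg] at hxV
    obtain ⟨f', hf', hfx⟩ := hxV
    rcases hfx.1 with hc | hc
    · exact hfx.2 hc
    · exact hc (hxT f' hf')
  exact hnot (hsmall _ hLlarge)

/-- (b): a non-small set is prethick. -/
lemma not_small_prethick {τ : Filter S} [τ.NeBot]
    (hinv : ∀ g : S, ∀ U ∈ τ, invImg g U ∈ τ)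
    {B : Set S} (h : ¬ smallTau τ B) : prethickTau τ B := by
  unfold smallTau at h
  push_neg at h
  obtain ⟨L, hL, hnl⟩ := h
  unfold largeTau at hnl
  push_neg at hnl
  obtain ⟨U₀, hU₀, hbad⟩ := hnl
  intro U hU
  obtain ⟨F, hF, hFL⟩ := hL (U ∩ U₀) (Filter.inter_mem hU hU₀)
  have hFU₀ : (↑F : Set S) ⊆ U₀ := fun x hx => (hF hx).2
  refine ⟨F, fun x hx => (hF hx).1, ?_⟩
  refine ⟨U₀ ∩ finvImg (↑F) L ∩ ⋂ f ∈ F, invImg f U₀, ?_, ?_⟩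
  · exact Filter.inter_mem (Filter.inter_mem hU₀ hFL)
      ((Filter.biInter_finset_mem F).2 fun g _ => hinv g U₀ hU₀)
  intro F' hF' V hV
  classical
  set G : Finset S := F ∪ (F ×ˢ F').image (fun p => p.1 * p.2) with hG
  have hGU : (↑G : Set S) ⊆ U₀ := by
    intro g hg
    simp only [hG, Finset.coe_union, Set.mem_union, Finset.mem_coe, Finset.mem_image,
      Finset.mem_product] at hg
    rcases hg with hg | ⟨⟨a, b⟩, ⟨ha, hb⟩, rfl⟩
    · exact hFU₀ hg
    · exact Set.mem_iInter₂.1 (hF' hb).2 a ha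
  have hGbad : finvImg (↑G) (L \ B) ∉ τ := hbad G hGU
  have hV' : (V ∩ ⋂ f' ∈ F', invImg f' (finvImg (↑F) L)) ∈ τ :=
    Filter.inter_mem hV ((Filter.biInter_finset_mem F').2 fun g _ => hinv g _ hFL)
  have hnsub : ¬ (V ∩ ⋂ f' ∈ F', invImg f' (finvImg (↑F) L)) ⊆ finvImg (↑G) (L \ B) :=
    fun hsub => hGbad (Filter.mem_of_superset hV' hsub)
  obtain ⟨x, hx, hxn⟩ := Set.not_subset.1 hnsub
  refine ⟨x, hx.1, ?_⟩
  intro f' hf'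
  have h1 : f' * x ∈ finvImg (↑F) L := Set.mem_iInter₂.1 hx.2 f' hf'
  rw [mem_finvImg] at h1
  obtain ⟨g, hg, hgx⟩ := h1
  have hggG : g * f' ∈ G := by
    simp only [hG, Finset.mem_union, Finset.mem_image, Finset.mem_product]
    exact Or.inr ⟨⟨g, f'⟩, ⟨hg, hf'⟩, rfl⟩
  have h2 : (g * f') * x ∉ L \ B := fun hmem =>
    hxn (mem_finvImg.2 ⟨g * f', hggG, hmem⟩)
  rw [mul_assoc] at h2
  rw [mem_finvImg]
  refine ⟨g, hg, ?_⟩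
  by_contra hnB
  exact h2 ⟨hgx, hnB⟩

theorem stmt12 (τ : Filter S) [τ.NeBot]
    (hinv : ∀ g : S, ∀ U ∈ τ, invImg g U ∈ τ)
    (A : Set S) (hA : prethickTau τ A)
    (n : ℕ) (f : Fin n → Set S) (hcover : A = ⋃ i, f i) :
    ∃ i, prethickTau τ (f i) := by
  by_contra h
  push_neg at h
  have hsmall : ∀ i, smallTau τ (f i) := by
    intro i
    by_contra hc
    exact h i (not_small_prethick hinv hc)
  have hAsmall : smallTau τ A := by
    have he : A = ⋃ i ∈ (Finset.univ : Finset (Fin n)), f i := by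
      rw [hcover]; simp
    rw [he]
    exact smallTau_biUnion _ _ fun i _ => hsmall i
  exact prethick_not_small hinv hA hAsmall
end

section
/- Let τ be a left inverse invariant filter on a semigroup S. If A ⊆ S is τ-prethick, then Δ_τ(A) = {x ∈ S : (x⁻¹A ∩ A) ∩ U ≠ ∅ for every U ∈ τ} is τ-large. -/
variable {S : Type*} [Semigroup S]

open Filter Set in
theorem _dummy_unused : True := trivial

open Filter Set

attribute [local instance] Ultrafilter.mul Ultrafilter.semigroup

namespace Stmt14Aux

variable {S : Type*} [Semigroup S]

theorem mem_umul {p q : Ultrafilter S} {A : Set S} :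
    A ∈ p * q ↔ {x | invImg x A ∈ q} ∈ p := by
  have h := Ultrafilter.eventually_mul p q (· ∈ A)
  simpa [Filter.Eventually, invImg] using h

/-- The set of ultrafilters extending `τ`. -/
def tauSet (τ : Filter S) : Set (Ultrafilter S) := {p | ∀ U ∈ τ, U ∈ p}

theorem tauSet_nonempty (τ : Filter S) [τ.NeBot] : (tauSet τ).Nonempty := by
  obtain ⟨u, hu⟩ := Ultrafilter.exists_le τ
  exact ⟨u, fun U hU => hu hU⟩

theorem tauSet_closed (τ : Filter S) : IsClosed (tauSet τ) := by
  have : tauSet τ = ⋂ (U : Set S) (_ : U ∈ τ), {p : Ultrafilter S | U ∈ p} := by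
    ext p; simp [tauSet]
  rw [this]
  exact isClosed_iInter fun U => isClosed_iInter fun _ => ultrafilter_isClosed_basic U

theorem umul_mem_tauSet {τ : Filter S} (hinv : ∀ g : S, ∀ U ∈ τ, invImg g U ∈ τ)
    (v : Ultrafilter S) {q : Ultrafilter S} (hq : q ∈ tauSet τ) : v * q ∈ tauSet τ := by
  intro U hU
  rw [mem_umul]
  have : {x : S | invImg x U ∈ q} = univ :=
    eq_univ_of_forall fun x => hq _ (hinv x U hU)
  rw [this]; exact univ_mem

/-- Left ideals of `βS` (closed nonempty). -/
def LId (N : Set (Ultrafilter S)) : Prop :=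
  N.Nonempty ∧ IsClosed N ∧ ∀ (v : Ultrafilter S), ∀ q ∈ N, v * q ∈ N

theorem exists_minimal_LId {N₀ : Set (Ultrafilter S)} (h : LId N₀) :
    ∃ L, LId L ∧ L ⊆ N₀ ∧ ∀ N, LId N → N ⊆ L → N = L := by
  set C : Set (Set (Ultrafilter S)) := {N | LId N ∧ N ⊆ N₀} with hC
  have hlb : ∀ c ⊆ C, IsChain (· ⊆ ·) c → c.Nonempty → ∃ lb ∈ C, ∀ s ∈ c, lb ⊆ s := by
    rintro c hcC hchain ⟨N₁, hN₁⟩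
    refine ⟨⋂₀ c, ⟨⟨?_, ?_, ?_⟩, ?_⟩, fun s hs => sInter_subset_of_mem hs⟩
    · -- nonempty
      have : Nonempty c := ⟨⟨N₁, hN₁⟩⟩
      have hne : (⋂ i : c, (i : Set (Ultrafilter S))).Nonempty := by
        apply IsCompact.nonempty_iInter_of_directed_nonempty_isCompact_isClosed
        · intro i j
          rcases hchain.total i.2 j.2 with hij | hij
          · exact ⟨i, Subset.rfl, hij⟩
          · exact ⟨j, hij, Subset.rfl⟩
        · exact fun i => (hcC i.2).1.1
        · exact fun i => (hcC i.2).1.2.1.isCompact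
        · exact fun i => (hcC i.2).1.2.1
      rwa [sInter_eq_iInter]
    · exact isClosed_sInter fun N hN => (hcC hN).1.2.1
    · intro v q hq
      exact fun N hN => (hcC hN).1.2.2 v q (hq N hN)
    · exact (sInter_subset_of_mem hN₁).trans (hcC hN₁).2
  obtain ⟨m, hmx, hm⟩ := zorn_superset_nonempty C hlb N₀ ⟨h, Subset.rfl⟩
  refine ⟨m, hm.prop.1, hm.prop.2, fun N hN hNm => ?_⟩
  exact subset_antisymm hNm (hm.le_of_le ⟨hN, hNm.trans hm.prop.2⟩ hNm)

/-- Existence of an ultrafilter extending `τ` containing a family of sets all of whose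
finite intersections are `τ`-positive. -/
theorem exists_ultra (τ : Filter S) [τ.NeBot] {ι : Type*} (c : ι → Set S)
    (hpos : ∀ u : Finset ι, ∀ V ∈ τ, (V ∩ ⋂ i ∈ u, c i).Nonempty) :
    ∃ p : Ultrafilter S, p ∈ tauSet τ ∧ ∀ i, c i ∈ p := by
  by_contra hcon
  have hK : tauSet τ ∩ ⋂ i, {p : Ultrafilter S | c i ∈ p} = ∅ := by
    rw [eq_empty_iff_forall_notMem]
    rintro p ⟨hp, hp2⟩
    exact hcon ⟨p, hp, fun i => by simpa using mem_iInter.1 hp2 i⟩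
  obtain ⟨u, hu⟩ := ((tauSet_closed τ).isCompact).elim_finite_subfamily_closed
    (fun i => {p : Ultrafilter S | c i ∈ p}) (fun i => ultrafilter_isClosed_basic _) hK
  have hne : (τ ⊓ 𝓟 (⋂ i ∈ u, c i)).NeBot :=
    Filter.inf_principal_neBot_iff.2 fun V hV => hpos u V hV
  obtain ⟨q, hq⟩ := Ultrafilter.exists_le (τ ⊓ 𝓟 (⋂ i ∈ u, c i))
  have hq1 : q ∈ tauSet τ := fun U hU => hq (Filter.mem_inf_of_left hU)
  have hq2 : (⋂ i ∈ u, c i) ∈ q := hq (Filter.mem_inf_of_right (mem_principal_self _))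
  have : q ∈ tauSet τ ∩ ⋂ i ∈ u, {p : Ultrafilter S | c i ∈ p} := by
    refine ⟨hq1, mem_iInter₂.2 fun i hi => ?_⟩
    exact mem_of_superset hq2 (biInter_subset_of_mem hi)
  rw [hu] at this
  exact this

theorem invImg_invImg (x y : S) (A : Set S) :
    invImg y (invImg x A) = invImg (x * y) A := by
  ext z; simp [invImg, mul_assoc]

theorem finvImg_singleton (x : S) (B : Set S) :
    finvImg (↑({x} : Finset S)) B = invImg x B := by
  simp [finvImg]

theorem finvImg_mono {F F' : Finset S} (h : F ⊆ F') (B : Set S) :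
    finvImg (↑F) B ⊆ finvImg (↑F') B := by
  apply Set.biUnion_subset_biUnion_left
  exact_mod_cast h

/-- Key largeness lemma: if `p` extends `τ`, `A ∈ p`, and `p` is "minimal"
(`p ∈ tauSet τ * (q' * p)` for all `q'` extending `τ`), then `{x | x⁻¹A ∈ p}` is τ-large. -/
theorem key_large (τ : Filter S) [τ.NeBot] {p : Ultrafilter S} (hp : p ∈ tauSet τ)
    {A : Set S} (hAp : A ∈ p)
    (hmin : ∀ q' ∈ tauSet τ, ∃ w ∈ tauSet τ, p = w * (q' * p))
    {U' : Set S} (hU' : U' ∈ τ) :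
    ∃ F : Finset S, ↑F ⊆ U' ∧ finvImg (↑F) {x | invImg x A ∈ p} ∈ τ := by
  classical
  set B : Set S := {x | invImg x A ∈ p} with hB
  by_contra hcon
  push_neg at hcon
  -- family of complements indexed by finsets
  set c : Finset S → Set S := fun F => if ↑F ⊆ U' then (finvImg (↑F) B)ᶜ else univ with hc
  have hpos : ∀ u : Finset (Finset S), ∀ V ∈ τ, (V ∩ ⋂ F ∈ u, c F).Nonempty := by
    intro u V hV
    set Fstar : Finset S := (u.filter fun F => ↑F ⊆ U').sup id with hFstar
    have hFstarU : ↑Fstar ⊆ U' := by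
      intro x hx
      rw [hFstar] at hx
      norm_cast at hx
      rw [Finset.mem_sup] at hx
      obtain ⟨F, hF, hxF⟩ := hx
      exact (Finset.mem_filter.1 hF).2 hxF
    have hnotin : finvImg (↑Fstar) B ∉ τ := hcon Fstar hFstarU
    have hVne : (V ∩ (finvImg (↑Fstar) B)ᶜ).Nonempty := by
      rcases (V ∩ (finvImg (↑Fstar) B)ᶜ).eq_empty_or_nonempty with he | hne
      · exfalso
        apply hnotin
        apply mem_of_superset hV
        intro x hx
        by_contra hxB
        exact absurd he (Set.nonempty_iff_ne_empty.1 ⟨x, hx, hxB⟩)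
      · exact hne
    obtain ⟨x, hxV, hxc⟩ := hVne
    refine ⟨x, hxV, mem_iInter₂.2 fun F hF => ?_⟩
    rw [hc]
    by_cases hFU : (↑F : Set S) ⊆ U'
    · simp only [if_pos hFU]
      intro hmem
      apply hxc
      have hFsub : F ⊆ Fstar := by
        rw [hFstar]
        exact Finset.le_sup (f := id) (Finset.mem_filter.2 ⟨hF, hFU⟩)
      exact finvImg_mono hFsub B hmem
    · simp [if_neg hFU]
  obtain ⟨q', hq', hq'c⟩ := exists_ultra τ c hpos
  obtain ⟨w, hw, hpw⟩ := hmin q' hq'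
  have hXw : {x | invImg x A ∈ q' * p} ∈ w := by
    rw [hpw] at hAp
    exact mem_umul.1 hAp
  have hh : ({x | invImg x A ∈ q' * p} ∩ U').Nonempty :=
    Ultrafilter.nonempty_of_mem (inter_mem hXw (hw U' hU'))
  obtain ⟨x, hx1, hx2⟩ := hh
  have hY : {y | invImg y (invImg x A) ∈ p} ∈ q' := mem_umul.1 hx1
  have hYeq : {y | invImg y (invImg x A) ∈ p} = invImg x B := by
    ext y
    simp only [mem_setOf_eq, invImg_invImg]
    rfl
  rw [hYeq] at hY
  have hxc : c {x} ∈ q' := hq'c {x}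
  have hsing : (↑({x} : Finset S) : Set S) ⊆ U' := by simpa using hx2
  rw [hc] at hxc
  simp only [if_pos hsing, finvImg_singleton] at hxc
  exact (Ultrafilter.compl_notMem_iff.2 hY) hxc

end Stmt14Aux

open Stmt14Aux in
theorem stmt14 (τ : Filter S) [τ.NeBot]
    (hinv : ∀ g : S, ∀ U ∈ τ, invImg g U ∈ τ)
    (A : Set S) (hA : prethickTau τ A) :
    largeTau τ (DeltaTau τ A) := by
  intro U hU
  obtain ⟨F, hFU, hthick⟩ := hA U hU
  set T : Set S := finvImg (↑F) A with hT
  obtain ⟨U₀, hU₀, hth⟩ := hthick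
  -- choose r extending τ with g⁻¹T ∈ r for all g ∈ U₀
  obtain ⟨r, hr, hrT⟩ := exists_ultra τ (ι := {g // g ∈ U₀})
    (fun g => invImg g.1 T) (by
      intro u V hV
      classical
      obtain ⟨x, hxV, hx⟩ := hth (u.image fun g => g.1) (by
        intro g hg
        simp only [Finset.coe_image, Set.mem_image] at hg
        obtain ⟨g', _, rfl⟩ := hg
        exact g'.2) V hV
      refine ⟨x, hxV, Set.mem_iInter₂.2 fun i hi => ?_⟩
      exact hx i.1 (Finset.mem_image_of_mem _ hi))
  -- N₀ = tauSet τ * r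
  set N₀ : Set (Ultrafilter S) := (fun w => w * r) '' tauSet τ with hN₀
  have hN₀tau : ∀ q ∈ N₀, q ∈ tauSet τ := by
    rintro q ⟨w, hw, rfl⟩
    exact umul_mem_tauSet hinv w hr
  have hN₀T : ∀ q ∈ N₀, T ∈ q := by
    rintro q ⟨w, hw, rfl⟩
    rw [mem_umul]
    exact Filter.mem_of_superset (hw U₀ hU₀) fun x hx => hrT ⟨x, hx⟩
  have hLId : LId N₀ := by
    refine ⟨(tauSet_nonempty τ).image _, ?_, ?_⟩
    · exact (((tauSet_closed τ).isCompact).image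
        (Ultrafilter.continuous_mul_left r)).isClosed
    · rintro v q ⟨w, hw, rfl⟩
      exact ⟨v * w, umul_mem_tauSet hinv v hw, by simpa using mul_assoc v w r⟩
  obtain ⟨L, hLI, hLN₀, hLmin⟩ := exists_minimal_LId hLId
  obtain ⟨q₀, hq₀⟩ := hLI.1
  have hq₀T : T ∈ q₀ := hN₀T q₀ (hLN₀ hq₀)
  -- find t ∈ F with t⁻¹A ∈ q₀
  have : (⋃ t ∈ (↑F : Set S), invImg t A) ∈ q₀ := hq₀T
  obtain ⟨t, htF, htA⟩ := (Ultrafilter.finite_biUnion_mem_iff F.finite_toSet).1 this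
  set p : Ultrafilter S := (pure t : Ultrafilter S) * q₀ with hp
  have hpL : p ∈ L := hLI.2.2 _ q₀ hq₀
  have hptau : p ∈ tauSet τ := hN₀tau p (hLN₀ hpL)
  have hAp : A ∈ p := by
    rw [hp, mem_umul]
    simpa [Ultrafilter.mem_pure] using htA
  -- minimality property
  have hmin : ∀ q' ∈ tauSet τ, ∃ w ∈ tauSet τ, p = w * (q' * p) := by
    intro q' hq'
    set N : Set (Ultrafilter S) := (fun w => w * (q' * p)) '' tauSet τ with hN
    have hNL : N ⊆ L := by
      rintro _ ⟨w, hw, rfl⟩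
      exact hLI.2.2 w _ (hLI.2.2 q' p hpL)
    have hNLId : LId N := by
      refine ⟨(tauSet_nonempty τ).image _, ?_, ?_⟩
      · exact (((tauSet_closed τ).isCompact).image
          (Ultrafilter.continuous_mul_left (q' * p))).isClosed
      · rintro v _ ⟨w, hw, rfl⟩
        exact ⟨v * w, umul_mem_tauSet hinv v hw, by simpa using mul_assoc v w (q' * p)⟩
    have hNeq : N = L := hLmin N hNLId hNL
    have : p ∈ N := hNeq ▸ hpL
    obtain ⟨w, hw, hweq⟩ := this
    exact ⟨w, hw, hweq.symm⟩
  -- B ⊆ Δ_τ(A)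
  set B : Set S := {x | invImg x A ∈ p} with hB
  have hBD : B ⊆ DeltaTau τ A := by
    intro x hx
    intro V hV
    exact Ultrafilter.nonempty_of_mem (inter_mem (inter_mem hx hAp) (hptau V hV))
  obtain ⟨F', hF'U, hF'B⟩ := key_large τ hptau hAp hmin hU
  refine ⟨F', hF'U, Filter.mem_of_superset hF'B ?_⟩
  exact Set.iUnion₂_mono fun g _ => fun z hz => hBD hz
end
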